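/- Let k ≥ 1, K̂ = [-1,1]³, and let H_k(K̂) be the enriched Raviart–Thomas space (P_{k,k-1,k-1} ⊕ E_{k,x}) × (P_{k-1,k,k-1} ⊕ E_{k,y}) × (P_{k-1,k-1,k} ⊕ E_{k,z}) with E_{k,x} = x^{k+1}(P_{k-1}(y)+P_{k-1}(z)) etc. A function q̂ ∈ H_k(K̂) vanishes identically if: (1) ∫_{ê} (q̂·ν̂) p̂ = 0 for all p̂ ∈ Q_{k-1}(ê) on each face ê of K̂; (2) ∫_{K̂} q̂₁ p̂ = 0 for all p̂ ∈ J_{k-1}(ξ)(P_{k-1}(η)+P_{k-1}(ζ)); (3),(4) the analogous conditions for q̂₂, q̂₃; and (5) ∫_{K̂} q̂·p̂ = 0 for all p̂ ∈ P_{k-2,k-1,k-1} × P_{k-1,k-2,k-1} × P_{k-1,k-1,k-2}. -/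

import Mathlib

open intervalIntegral MvPolynomial

/-- The Jacobi-type polynomials of the paper. -/
noncomputable def Jac (l : ℕ) (ξ : ℝ) : ℝ :=
  ((l + 1).factorial : ℝ) ^ 2 *
    ∑ s ∈ Finset.range (l + 1),
      (1 / ((s.factorial * (l + 1 - s).factorial * (s + 1).factorial * (l - s).factorial : ℕ) : ℝ)) *
        ((ξ - 1) / 2) ^ (l - s) * ((ξ + 1) / 2) ^ s

/-- Evaluation of a trivariate polynomial (variables `0,1,2` are `ξ,η,ζ`). -/
noncomputable def ev3 (p : MvPolynomial (Fin 3) ℝ) (x y z : ℝ) : ℝ :=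
  MvPolynomial.eval ![x, y, z] p

/-- Membership in the anisotropic space `P_{a,b,c}` of polynomials of degree `≤ a` in the
first variable, `≤ b` in the second, and `≤ c` in the third. -/
def memP3 (a b c : ℕ) (p : MvPolynomial (Fin 3) ℝ) : Prop :=
  MvPolynomial.degreeOf 0 p ≤ a ∧ MvPolynomial.degreeOf 1 p ≤ b ∧
    MvPolynomial.degreeOf 2 p ≤ c

/-- First component of the enriched Raviart–Thomas space:
`P_{k,k-1,k-1} ⊕ x^{k+1}(P_{k-1}(y) + P_{k-1}(z))`. -/
def memRT (k : ℕ) (u v w : Fin 3) (q : MvPolynomial (Fin 3) ℝ) : Prop :=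
  ∃ p : MvPolynomial (Fin 3) ℝ, ∃ cu cw : ℕ → ℝ,
    MvPolynomial.degreeOf u p ≤ k ∧ MvPolynomial.degreeOf v p ≤ k - 1 ∧
    MvPolynomial.degreeOf w p ≤ k - 1 ∧
    q = p + X u ^ (k + 1) *
      ((∑ j ∈ Finset.range k, MvPolynomial.C (cu j) * X v ^ j) +
        ∑ j ∈ Finset.range k, MvPolynomial.C (cw j) * X w ^ j)


open Set MeasureTheory Function



/-- Continuity of trivariate polynomial evaluation. -/
lemma contEv3 (q : MvPolynomial (Fin 3) ℝ) :
    Continuous fun p : ℝ × ℝ × ℝ => MvPolynomial.eval ![p.1, p.2.1, p.2.2] q := by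
  have hv : Continuous fun p : ℝ × ℝ × ℝ => (![p.1, p.2.1, p.2.2] : Fin 3 → ℝ) := by
    refine continuous_pi fun i => ?_
    fin_cases i
    · exact continuous_fst
    · exact continuous_fst.comp continuous_snd
    · exact continuous_snd.comp continuous_snd
  exact (MvPolynomial.continuous_eval q).comp hv

lemma contEv2 (q : MvPolynomial (Fin 2) ℝ) :
    Continuous fun p : ℝ × ℝ => MvPolynomial.eval ![p.1, p.2] q := by
  have hv : Continuous fun p : ℝ × ℝ => (![p.1, p.2] : Fin 2 → ℝ) := by
    refine continuous_pi fun i => ?_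
    fin_cases i
    · exact continuous_fst
    · exact continuous_snd
  exact (MvPolynomial.continuous_eval q).comp hv

/-- A continuous function, nonnegative on `[-1,1]`, with vanishing integral, vanishes on
`(-1,1)`. -/
lemma int1_zero {f : ℝ → ℝ} (hc : Continuous f) (h0 : ∀ x ∈ Icc (-1:ℝ) 1, 0 ≤ f x)
    (hI : (∫ x in (-1:ℝ)..1, f x) = 0) : ∀ x ∈ Ioo (-1:ℝ) 1, f x = 0 := by
  have hfi : IntervalIntegrable f MeasureTheory.volume (-1) 1 := hc.intervalIntegrable _ _
  have hae : 0 ≤ᵐ[MeasureTheory.volume.restrict (Ioc (-1:ℝ) 1)] f := by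
    filter_upwards [MeasureTheory.ae_restrict_mem measurableSet_Ioc] with x hx
    exact h0 x (Ioc_subset_Icc_self hx)
  have h := (intervalIntegral.integral_eq_zero_iff_of_le_of_nonneg_ae (by norm_num) hae hfi).mp hI
  intro x hx
  by_contra hne
  have hU : IsOpen ({y | f y ≠ 0} ∩ Ioo (-1:ℝ) 1) :=
    ((isClosed_singleton.preimage hc).isOpen_compl).inter isOpen_Ioo
  have hUne : ({y | f y ≠ 0} ∩ Ioo (-1:ℝ) 1).Nonempty := ⟨x, hne, hx⟩
  have hpos := hU.measure_pos MeasureTheory.volume hUne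
  have hm : (MeasureTheory.volume.restrict (Ioc (-1:ℝ) 1)) {y | ¬ f y = 0} = 0 :=
    MeasureTheory.ae_iff.mp h
  rw [MeasureTheory.Measure.restrict_apply' measurableSet_Ioc] at hm
  have hsub : ({y | f y ≠ 0} ∩ Ioo (-1:ℝ) 1) ⊆ {y | ¬ f y = 0} ∩ Ioc (-1:ℝ) 1 :=
    inter_subset_inter_right _ Ioo_subset_Ioc_self
  have := MeasureTheory.measure_mono_null hsub hm
  exact absurd this hpos.ne'

/-- Two-dimensional version. -/
lemma int2_zero {f : ℝ → ℝ → ℝ} (hc : Continuous (Function.uncurry f))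
    (h0 : ∀ x ∈ Icc (-1:ℝ) 1, ∀ y ∈ Icc (-1:ℝ) 1, 0 ≤ f x y)
    (hI : (∫ x in (-1:ℝ)..1, ∫ y in (-1:ℝ)..1, f x y) = 0) :
    ∀ x ∈ Ioo (-1:ℝ) 1, ∀ y ∈ Ioo (-1:ℝ) 1, f x y = 0 := by
  have hg : Continuous fun x => ∫ y in (-1:ℝ)..1, f x y :=
    intervalIntegral.continuous_parametric_intervalIntegral_of_continuous' hc _ _
  have hg0 : ∀ x ∈ Icc (-1:ℝ) 1, 0 ≤ ∫ y in (-1:ℝ)..1, f x y := fun x hx =>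
    intervalIntegral.integral_nonneg (by norm_num) fun y hy => h0 x hx y hy
  have hgz := int1_zero hg hg0 hI
  intro x hx y hy
  have hcx : Continuous (f x) := hc.comp (Continuous.prodMk_right x)
  exact int1_zero hcx (h0 x (Ioo_subset_Icc_self hx)) (hgz x hx) y hy

/-- Three-dimensional version. -/
lemma int3_zero {f : ℝ → ℝ → ℝ → ℝ}
    (hc : Continuous fun p : ℝ × ℝ × ℝ => f p.1 p.2.1 p.2.2)
    (h0 : ∀ x ∈ Icc (-1:ℝ) 1, ∀ y ∈ Icc (-1:ℝ) 1, ∀ z ∈ Icc (-1:ℝ) 1, 0 ≤ f x y z)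
    (hI : (∫ x in (-1:ℝ)..1, ∫ y in (-1:ℝ)..1, ∫ z in (-1:ℝ)..1, f x y z) = 0) :
    ∀ x ∈ Ioo (-1:ℝ) 1, ∀ y ∈ Ioo (-1:ℝ) 1, ∀ z ∈ Ioo (-1:ℝ) 1, f x y z = 0 := by
  have hH : Continuous (Function.uncurry fun x y => ∫ z in (-1:ℝ)..1, f x y z) := by
    apply intervalIntegral.continuous_parametric_intervalIntegral_of_continuous'
      (f := fun p : ℝ × ℝ => fun z => f p.1 p.2 z)
    exact hc.comp ((continuous_fst.comp continuous_fst).prodMk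
      ((continuous_snd.comp continuous_fst).prodMk continuous_snd))
  have h0' : ∀ x ∈ Icc (-1:ℝ) 1, ∀ y ∈ Icc (-1:ℝ) 1, 0 ≤ ∫ z in (-1:ℝ)..1, f x y z :=
    fun x hx y hy => intervalIntegral.integral_nonneg (by norm_num) fun z hz => h0 x hx y hy z hz
  have h2 := int2_zero hH h0' hI
  intro x hx y hy z hz
  have hcxy : Continuous (f x y) :=
    hc.comp (continuous_const.prodMk (continuous_const.prodMk continuous_id))
  exact int1_zero hcxy (h0 x (Ioo_subset_Icc_self hx) y (Ioo_subset_Icc_self hy))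
    (h2 x hx y hy) z hz

/-- Fubini swap for continuous functions on `[-1,1]²`. -/
lemma swapII {f : ℝ → ℝ → ℝ} (hc : Continuous (Function.uncurry f)) :
    (∫ x in (-1:ℝ)..1, ∫ y in (-1:ℝ)..1, f x y)
      = ∫ y in (-1:ℝ)..1, ∫ x in (-1:ℝ)..1, f x y := by
  have h1 : ((-1:ℝ) ≤ 1) := by norm_num
  have hInt : MeasureTheory.Integrable (Function.uncurry f)
      ((MeasureTheory.volume.restrict (Ioc (-1:ℝ) 1)).prod
        (MeasureTheory.volume.restrict (Ioc (-1:ℝ) 1))) := by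
    rw [MeasureTheory.Measure.prod_restrict]
    have hci : MeasureTheory.IntegrableOn (Function.uncurry f)
        (Icc (-1:ℝ) 1 ×ˢ Icc (-1:ℝ) 1) (MeasureTheory.volume.prod MeasureTheory.volume) :=
      hc.continuousOn.integrableOn_compact (isCompact_Icc.prod isCompact_Icc)
    have := hci.mono_set (Set.prod_mono Ioc_subset_Icc_self Ioc_subset_Icc_self)
    exact this
  have := MeasureTheory.integral_integral_swap hInt
  simp only [intervalIntegral.integral_of_le h1]
  exact this



/-- A real multivariate polynomial vanishing on an open box is zero. -/
lemma mv_zero : ∀ (n : ℕ) (p : MvPolynomial (Fin n) ℝ),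
    (∀ v : Fin n → ℝ, (∀ i, v i ∈ Ioo (-1:ℝ) 1) → eval v p = 0) → p = 0 := by
  intro n
  induction n with
  | zero =>
    intro p h
    obtain ⟨a, rfl⟩ := MvPolynomial.C_surjective (Fin 0) p
    have := h (fun i => 0) (fun i => i.elim0)
    rw [eval_C] at this
    rw [this, map_zero]
  | succ n ih =>
    intro p h
    have hF : MvPolynomial.finSuccEquiv ℝ n p = 0 := by
      apply Polynomial.ext
      intro i
      have hcoeff : ∀ v : Fin n → ℝ, (∀ i, v i ∈ Ioo (-1:ℝ) 1) →
          eval v ((MvPolynomial.finSuccEquiv ℝ n p).coeff i) = 0 := by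
        intro v hv
        have hpol : ((MvPolynomial.finSuccEquiv ℝ n p).map (eval v)) = 0 := by
          apply Polynomial.eq_zero_of_infinite_isRoot
          apply Set.Infinite.mono (s := Ioo (-1:ℝ) 1)
          · intro y hy
            have := h (Fin.cons y v) (fun i => by
              refine Fin.cases ?_ ?_ i
              · exact hy
              · intro j; simpa using hv j)
            rw [eval_eq_eval_mv_eval'] at this
            exact this
          · exact Ioo_infinite (by norm_num)
        have := congrArg (fun q => Polynomial.coeff q i) hpol
        simpa using this
      exact ih _ hcoeff
    have := congrArg (MvPolynomial.finSuccEquiv ℝ n).symm hF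
    simpa using this


/-- Univariate polynomial representing `Jac l`. -/
noncomputable def jacPoly (l : ℕ) : Polynomial ℝ :=
  Polynomial.C (((l + 1).factorial : ℝ)) ^ 2 *
    ∑ s ∈ Finset.range (l + 1),
      Polynomial.C (1 / ((s.factorial * (l + 1 - s).factorial * (s + 1).factorial * (l - s).factorial : ℕ) : ℝ)) *
        ((Polynomial.X - Polynomial.C 1) * Polynomial.C (1/2)) ^ (l - s) * ((Polynomial.X + Polynomial.C 1) * Polynomial.C (1/2)) ^ s

lemma jacPoly_eval (l : ℕ) (x : ℝ) : Polynomial.eval x (jacPoly l) = Jac l x := by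
  unfold jacPoly Jac
  rw [Polynomial.eval_mul, Polynomial.eval_pow, Polynomial.eval_C, Polynomial.eval_finset_sum]
  congr 1
  apply Finset.sum_congr rfl
  intro s _
  simp only [Polynomial.eval_mul, Polynomial.eval_pow, Polynomial.eval_C, Polynomial.eval_sub, Polynomial.eval_add, Polynomial.eval_X, Polynomial.eval_one]
  ring

lemma jacPoly_natDegree_le (l : ℕ) : (jacPoly l).natDegree ≤ l := by
  unfold jacPoly
  refine le_trans (Polynomial.natDegree_mul_le) ?_
  have h1 : (Polynomial.C (((l + 1).factorial : ℝ)) ^ 2).natDegree = 0 := by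
    simp [Polynomial.natDegree_pow]
  rw [h1, zero_add]
  refine le_trans (Polynomial.natDegree_sum_le _ _) ?_
  rw [Finset.fold_max_le]
  refine ⟨Nat.zero_le _, ?_⟩
  intro s hs
  simp only [Function.comp_apply]
  refine le_trans Polynomial.natDegree_mul_le ?_
  have hs' : s ≤ l := Nat.lt_succ_iff.mp (Finset.mem_range.mp hs)
  have e1 : (((Polynomial.X : Polynomial ℝ) - Polynomial.C 1) * Polynomial.C (1/2)).natDegree ≤ 1 := by
    refine le_trans Polynomial.natDegree_mul_le ?_
    rw [Polynomial.natDegree_C, add_zero, Polynomial.natDegree_X_sub_C]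
  have e2 : (((Polynomial.X : Polynomial ℝ) + Polynomial.C 1) * Polynomial.C (1/2)).natDegree ≤ 1 := by
    refine le_trans Polynomial.natDegree_mul_le ?_
    rw [Polynomial.natDegree_C, add_zero, Polynomial.natDegree_X_add_C]
  calc _ ≤ (Polynomial.C (1 / ((s.factorial * (l + 1 - s).factorial * (s + 1).factorial * (l - s).factorial : ℕ) : ℝ)) *
        ((Polynomial.X - Polynomial.C 1) * Polynomial.C (1/2)) ^ (l - s)).natDegree + s := by
        refine Nat.add_le_add le_rfl ?_
        exact le_trans (Polynomial.natDegree_pow_le_of_le s e2) (by omega)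
    _ ≤ (l - s) + s := by
        refine Nat.add_le_add ?_ le_rfl
        refine le_trans Polynomial.natDegree_mul_le ?_
        rw [Polynomial.natDegree_C, zero_add]
        exact le_trans (Polynomial.natDegree_pow_le_of_le _ e1) (by omega)
    _ = l := by omega

lemma jacPoly_coeff_pos (l : ℕ) : 0 < (jacPoly l).coeff l := by
  unfold jacPoly
  have hrw : ∀ s ∈ Finset.range (l+1),
      Polynomial.C (1 / ((s.factorial * (l + 1 - s).factorial * (s + 1).factorial * (l - s).factorial : ℕ) : ℝ)) *
        ((Polynomial.X - Polynomial.C 1) * Polynomial.C (1/2)) ^ (l - s) * ((Polynomial.X + Polynomial.C 1) * Polynomial.C (1/2)) ^ s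
      = Polynomial.C ((1 / ((s.factorial * (l + 1 - s).factorial * (s + 1).factorial * (l - s).factorial : ℕ) : ℝ)) * (1/2)^l) *
        ((Polynomial.X - Polynomial.C 1) ^ (l - s) * (Polynomial.X + Polynomial.C 1) ^ s) := by
    intro s hs
    have hs' : s ≤ l := Nat.lt_succ_iff.mp (Finset.mem_range.mp hs)
    rw [mul_pow, mul_pow, ← Polynomial.C_pow, ← Polynomial.C_pow]
    have hl : ((1:ℝ)/2)^l = (1/2)^(l-s) * (1/2)^s := by
      rw [← pow_add]; congr 1; omega
    rw [hl, ← mul_assoc, Polynomial.C_mul, Polynomial.C_mul]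
    ring
  rw [Finset.sum_congr rfl hrw]
  have hCsq : (Polynomial.C (((l + 1).factorial : ℝ))) ^ 2 = Polynomial.C ((((l + 1).factorial : ℝ)) ^ 2) := by
    rw [Polynomial.C_pow]
  rw [hCsq, Polynomial.coeff_C_mul, Polynomial.finset_sum_coeff]
  have hterm : ∀ s ∈ Finset.range (l+1),
      (Polynomial.C ((1 / ((s.factorial * (l + 1 - s).factorial * (s + 1).factorial * (l - s).factorial : ℕ) : ℝ)) * (1/2)^l) *
        ((Polynomial.X - Polynomial.C 1) ^ (l - s) * (Polynomial.X + Polynomial.C 1) ^ s)).coeff l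
      = (1 / ((s.factorial * (l + 1 - s).factorial * (s + 1).factorial * (l - s).factorial : ℕ) : ℝ)) * (1/2)^l := by
    intro s hs
    have hs' : s ≤ l := Nat.lt_succ_iff.mp (Finset.mem_range.mp hs)
    rw [Polynomial.coeff_C_mul]
    have hm : (((Polynomial.X : Polynomial ℝ) - Polynomial.C 1) ^ (l - s) * (Polynomial.X + Polynomial.C 1) ^ s).Monic := by
      have h2 : ((Polynomial.X : Polynomial ℝ) + Polynomial.C 1) = Polynomial.X - Polynomial.C (-1) := by rw [map_neg, sub_neg_eq_add]
      exact ((Polynomial.monic_X_sub_C (1:ℝ)).pow _).mul (by rw [h2]; exact (Polynomial.monic_X_sub_C (-1:ℝ)).pow _)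
    have hdeg : (((Polynomial.X : Polynomial ℝ) - Polynomial.C 1) ^ (l - s) * (Polynomial.X + Polynomial.C 1) ^ s).natDegree = l := by
      have h2 : ((Polynomial.X : Polynomial ℝ) + Polynomial.C 1) = Polynomial.X - Polynomial.C (-1) := by rw [map_neg, sub_neg_eq_add]
      rw [h2, ((Polynomial.monic_X_sub_C (1:ℝ)).pow _).natDegree_mul ((Polynomial.monic_X_sub_C (-1:ℝ)).pow _),
        (Polynomial.monic_X_sub_C (1:ℝ)).natDegree_pow, (Polynomial.monic_X_sub_C (-1:ℝ)).natDegree_pow,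
        Polynomial.natDegree_X_sub_C, Polynomial.natDegree_X_sub_C]
      omega
    have := hm.coeff_natDegree
    rw [hdeg] at this
    rw [this, mul_one]
  rw [Finset.sum_congr rfl hterm]
  have hpos : ∀ s ∈ Finset.range (l+1),
      0 < (1 / ((s.factorial * (l + 1 - s).factorial * (s + 1).factorial * (l - s).factorial : ℕ) : ℝ)) * ((1:ℝ)/2)^l := by
    intro s _
    apply mul_pos
    · apply one_div_pos.mpr
      have : 0 < s.factorial * (l + 1 - s).factorial * (s + 1).factorial * (l - s).factorial :=
        Nat.mul_pos (Nat.mul_pos (Nat.mul_pos s.factorial_pos (l+1-s).factorial_pos)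
          (s+1).factorial_pos) (l-s).factorial_pos
      exact_mod_cast this
    · positivity
  apply mul_pos
  · have : (0:ℝ) < ((l+1).factorial : ℝ) := by exact_mod_cast (l+1).factorial_pos
    positivity
  · exact Finset.sum_pos hpos ⟨0, Finset.mem_range.mpr (Nat.succ_pos l)⟩

lemma vec3_eta (v : Fin 3 → ℝ) : ![v 0, v 1, v 2] = v := by
  funext i; fin_cases i <;> rfl

lemma vec2_eta (v : Fin 2 → ℝ) : ![v 0, v 1] = v := by
  funext i; fin_cases i <;> rfl

/-- The triple-integral functional. -/
noncomputable def T3 (p : MvPolynomial (Fin 3) ℝ) : ℝ :=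
  ∫ x in (-1:ℝ)..1, ∫ y in (-1:ℝ)..1, ∫ z in (-1:ℝ)..1, ev3 p x y z

lemma contEv3' (q : MvPolynomial (Fin 3) ℝ) :
    Continuous fun p : ℝ × ℝ × ℝ => ev3 q p.1 p.2.1 p.2.2 := by
  unfold ev3; exact contEv3 q

lemma contZ (q : MvPolynomial (Fin 3) ℝ) (x y : ℝ) : Continuous fun z => ev3 q x y z := by
  unfold ev3
  have hv : Continuous fun z : ℝ => (![x, y, z] : Fin 3 → ℝ) := by
    refine continuous_pi fun i => ?_
    fin_cases i
    · exact continuous_const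
    · exact continuous_const
    · exact continuous_id
  exact (MvPolynomial.continuous_eval q).comp hv

lemma contInner (q : MvPolynomial (Fin 3) ℝ) (x : ℝ) :
    Continuous fun y => ∫ z in (-1:ℝ)..1, ev3 q x y z := by
  unfold ev3
  apply intervalIntegral.continuous_parametric_intervalIntegral_of_continuous'
    (f := fun y z => MvPolynomial.eval ![x, y, z] q)
  have hv : Continuous fun p : ℝ × ℝ => (![x, p.1, p.2] : Fin 3 → ℝ) := by
    refine continuous_pi fun i => ?_
    fin_cases i
    · exact continuous_const
    · exact continuous_fst
    · exact continuous_snd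
  exact (MvPolynomial.continuous_eval q).comp hv

lemma contInner2 (q : MvPolynomial (Fin 3) ℝ) :
    Continuous fun x => ∫ y in (-1:ℝ)..1, ∫ z in (-1:ℝ)..1, ev3 q x y z := by
  unfold ev3
  apply intervalIntegral.continuous_parametric_intervalIntegral_of_continuous'
    (f := fun x y => ∫ z in (-1:ℝ)..1, MvPolynomial.eval ![x, y, z] q)
  apply intervalIntegral.continuous_parametric_intervalIntegral_of_continuous'
    (f := fun p : ℝ × ℝ => fun z => MvPolynomial.eval ![p.1, p.2, z] q)
  have hv : Continuous fun w : (ℝ × ℝ) × ℝ => (![w.1.1, w.1.2, w.2] : Fin 3 → ℝ) := by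
    refine continuous_pi fun i => ?_
    fin_cases i
    · exact continuous_fst.comp continuous_fst
    · exact continuous_snd.comp continuous_fst
    · exact continuous_snd
  exact (MvPolynomial.continuous_eval q).comp hv

lemma T3_add (p q : MvPolynomial (Fin 3) ℝ) : T3 (p + q) = T3 p + T3 q := by
  unfold T3
  have e0 : ∀ x y z : ℝ, ev3 (p + q) x y z = ev3 p x y z + ev3 q x y z := by
    intro x y z; simp [ev3]
  simp only [e0]
  have e1 : ∀ x y : ℝ, (∫ z in (-1:ℝ)..1, (ev3 p x y z + ev3 q x y z))
      = (∫ z in (-1:ℝ)..1, ev3 p x y z) + ∫ z in (-1:ℝ)..1, ev3 q x y z := fun x y =>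
    intervalIntegral.integral_add ((contZ p x y).intervalIntegrable _ _)
      ((contZ q x y).intervalIntegrable _ _)
  simp only [e1]
  have e2 : ∀ x : ℝ, (∫ y in (-1:ℝ)..1,
      ((∫ z in (-1:ℝ)..1, ev3 p x y z) + ∫ z in (-1:ℝ)..1, ev3 q x y z))
      = (∫ y in (-1:ℝ)..1, ∫ z in (-1:ℝ)..1, ev3 p x y z)
        + ∫ y in (-1:ℝ)..1, ∫ z in (-1:ℝ)..1, ev3 q x y z := fun x =>
    intervalIntegral.integral_add ((contInner p x).intervalIntegrable _ _)
      ((contInner q x).intervalIntegrable _ _)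
  simp only [e2]
  exact intervalIntegral.integral_add ((contInner2 p).intervalIntegrable _ _)
    ((contInner2 q).intervalIntegrable _ _)

lemma T3_smul (c : ℝ) (p : MvPolynomial (Fin 3) ℝ) : T3 (c • p) = c * T3 p := by
  unfold T3
  have e0 : ∀ x y z : ℝ, ev3 (c • p) x y z = c * ev3 p x y z := by
    intro x y z; simp [ev3, MvPolynomial.smul_eq_C_mul]
  simp only [e0, intervalIntegral.integral_const_mul]

lemma T3_zero : T3 0 = 0 := by simp [T3, ev3]

lemma span_ortho (q : MvPolynomial (Fin 3) ℝ) (G : Set (MvPolynomial (Fin 3) ℝ))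
    (hG : ∀ g ∈ G, T3 (q * g) = 0) {r : MvPolynomial (Fin 3) ℝ}
    (hr : r ∈ Submodule.span ℝ G) : T3 (q * r) = 0 := by
  induction hr using Submodule.span_induction with
  | mem g hg => exact hG g hg
  | zero => rw [mul_zero]; exact T3_zero
  | add a b _ _ ha hb => rw [mul_add, T3_add, ha, hb, add_zero]
  | smul c a _ ha => rw [mul_smul_comm, T3_smul, ha, mul_zero]

/-- Membership in the span of box monomials from `degreeOf` bounds. -/
lemma mem_span_box {a b c : ℕ} {p : MvPolynomial (Fin 3) ℝ}
    (h0 : MvPolynomial.degreeOf 0 p ≤ a) (h1 : MvPolynomial.degreeOf 1 p ≤ b)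
    (h2 : MvPolynomial.degreeOf 2 p ≤ c) :
    p ∈ Submodule.span ℝ {g : MvPolynomial (Fin 3) ℝ |
      ∃ a' b' c' : ℕ, a' ≤ a ∧ b' ≤ b ∧ c' ≤ c ∧ g = X 0 ^ a' * X 1 ^ b' * X 2 ^ c'} := by
  nth_rewrite 1 [p.as_sum]
  apply Submodule.sum_mem
  intro m hm
  have hmon : (MvPolynomial.monomial m) (MvPolynomial.coeff m p)
      = MvPolynomial.coeff m p • (X 0 ^ m 0 * X 1 ^ m 1 * X 2 ^ m 2) := by
    rw [MvPolynomial.monomial_eq, ← MvPolynomial.smul_eq_C_mul]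
    congr 1
    rw [Finsupp.prod_fintype _ _ (fun i => pow_zero _), Fin.prod_univ_three]
  rw [hmon]
  refine Submodule.smul_mem _ _ (Submodule.subset_span ?_)
  exact ⟨m 0, m 1, m 2, MvPolynomial.degreeOf_le_iff.mp h0 m hm,
    MvPolynomial.degreeOf_le_iff.mp h1 m hm, MvPolynomial.degreeOf_le_iff.mp h2 m hm, rfl⟩

/-- Degree bookkeeping helpers -/
lemma degX_pow_self (i : Fin 3) (n : ℕ) :
    MvPolynomial.degreeOf i ((X i : MvPolynomial (Fin 3) ℝ) ^ n) ≤ n := by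
  refine le_trans (MvPolynomial.degreeOf_pow_le _ _ _) ?_
  rw [MvPolynomial.degreeOf_X]
  simp

lemma degX_pow_ne {i j : Fin 3} (h : i ≠ j) (n : ℕ) :
    MvPolynomial.degreeOf i ((X j : MvPolynomial (Fin 3) ℝ) ^ n) = 0 := by
  refine Nat.le_zero.mp (le_trans (MvPolynomial.degreeOf_pow_le _ _ _) ?_)
  rw [MvPolynomial.degreeOf_X, if_neg h]
  simp

lemma embC (a : MvPolynomial (Fin 2) ℝ) :
    MvPolynomial.finSuccEquiv ℝ 2 (MvPolynomial.rename Fin.succ a) = Polynomial.C a := by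
  induction a using MvPolynomial.induction_on with
  | C c => rw [MvPolynomial.rename_C]; simp [MvPolynomial.finSuccEquiv_apply]
  | add p q hp hq => rw [map_add, map_add, hp, hq, map_add]
  | mul_X p j hp =>
      rw [map_mul, map_mul, hp, MvPolynomial.rename_X, MvPolynomial.finSuccEquiv_X_succ,
        Polynomial.C_mul]

lemma eval_poly_eval_C (P : Polynomial (MvPolynomial (Fin 2) ℝ)) (s : ℝ) (w : Fin 2 → ℝ) :
    MvPolynomial.eval w (Polynomial.eval (MvPolynomial.C s) P)
      = Polynomial.eval s (P.map (MvPolynomial.eval w)) := by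
  induction P using Polynomial.induction_on' with
  | add p q hp hq => simp [hp, hq]
  | monomial n a =>
      simp [Polynomial.eval_monomial, Polynomial.map_monomial, map_mul, map_pow,
        MvPolynomial.eval_C]

lemma ev3_aevalX0 (jp : Polynomial ℝ) (v : Fin 3 → ℝ) :
    MvPolynomial.eval v (Polynomial.aeval (X 0 : MvPolynomial (Fin 3) ℝ) jp)
      = Polynomial.eval (v 0) jp := by
  induction jp using Polynomial.induction_on' with
  | add p q hp hq => simp [hp, hq]
  | monomial n a =>
      simp [Polynomial.aeval_monomial, Polynomial.eval_monomial, map_mul, map_pow,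
        MvPolynomial.algebraMap_eq]

/-- Sum over even and odd indices. -/
lemma sum_even_odd {M : Type*} [AddCommMonoid M] (f : ℕ → M) (n : ℕ) :
    ∑ i ∈ Finset.range (2 * n), f i
      = (∑ t ∈ Finset.range n, f (2 * t)) + ∑ t ∈ Finset.range n, f (2 * t + 1) := by
  induction n with
  | zero => simp
  | succ m ih =>
      have h2 : 2 * (m + 1) = (2 * m) + 1 + 1 := by ring
      rw [h2, Finset.sum_range_succ, Finset.sum_range_succ, Finset.sum_range_succ,
        Finset.sum_range_succ, ih]
      abel

lemma contYZ (q : MvPolynomial (Fin 3) ℝ) (s : ℝ) :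
    Continuous fun p : ℝ × ℝ => ev3 q s p.1 p.2 := by
  unfold ev3
  have hv : Continuous fun p : ℝ × ℝ => (![s, p.1, p.2] : Fin 3 → ℝ) := by
    refine continuous_pi fun i => ?_
    fin_cases i
    · exact continuous_const
    · exact continuous_fst
    · exact continuous_snd
  exact (MvPolynomial.continuous_eval q).comp hv

lemma FC (c : ℝ) : MvPolynomial.finSuccEquiv ℝ 2 (MvPolynomial.C c)
    = Polynomial.C (MvPolynomial.C c) := by
  simp [MvPolynomial.finSuccEquiv_apply]

lemma succ_zero_fin2 : (Fin.succ (0 : Fin 2)) = (1 : Fin 3) := by decide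
lemma succ_one_fin2 : (Fin.succ (1 : Fin 2)) = (2 : Fin 3) := by decide

lemma deg0_emb (a : MvPolynomial (Fin 2) ℝ) :
    MvPolynomial.degreeOf 0 (MvPolynomial.rename Fin.succ a : MvPolynomial (Fin 3) ℝ) = 0 := by
  refine Nat.le_zero.mp (MvPolynomial.degreeOf_le_iff.mpr fun m hm => ?_)
  rw [MvPolynomial.support_rename_of_injective (Fin.succ_injective 2)] at hm
  obtain ⟨m', _, rfl⟩ := Finset.mem_image.mp hm
  rw [Finsupp.mapDomain_notin_range]
  rintro ⟨j, hj⟩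
  exact absurd (congrArg Fin.val hj) (by simp [Fin.val_succ])

lemma deg_emb_succ (i : Fin 2) (a : MvPolynomial (Fin 2) ℝ) :
    MvPolynomial.degreeOf (Fin.succ i) (MvPolynomial.rename Fin.succ a : MvPolynomial (Fin 3) ℝ)
      = MvPolynomial.degreeOf i a :=
  MvPolynomial.degreeOf_rename_of_injective (Fin.succ_injective 2) i

/-- Degree of a univariate-type sum. -/
lemma degS {k : ℕ} (i v : Fin 3) (c : ℕ → ℝ) (m : ℕ) (him : i = v → k - 1 ≤ m) :
    MvPolynomial.degreeOf i
      (∑ j ∈ Finset.range k, MvPolynomial.C (c j) * X v ^ j : MvPolynomial (Fin 3) ℝ) ≤ m := by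
  refine le_trans (MvPolynomial.degreeOf_sum_le _ _ _) (Finset.sup_le fun j hj => ?_)
  refine le_trans (MvPolynomial.degreeOf_mul_le _ _ _) ?_
  rw [MvPolynomial.degreeOf_C, zero_add]
  by_cases hiv : i = v
  · subst hiv
    refine le_trans (degX_pow_self i j) (le_trans ?_ (him rfl))
    have := Finset.mem_range.mp hj
    omega
  · rw [degX_pow_ne hiv]
    exact Nat.zero_le m

lemma degAeval0 (jp : Polynomial ℝ) (n : ℕ) (hn : jp.natDegree ≤ n) :
    MvPolynomial.degreeOf 0 (Polynomial.aeval (X 0 : MvPolynomial (Fin 3) ℝ) jp) ≤ n := by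
  rw [Polynomial.aeval_eq_sum_range]
  refine le_trans (MvPolynomial.degreeOf_sum_le _ _ _) (Finset.sup_le fun i hi => ?_)
  rw [MvPolynomial.smul_eq_C_mul]
  refine le_trans (MvPolynomial.degreeOf_mul_le _ _ _) ?_
  rw [MvPolynomial.degreeOf_C, zero_add]
  refine le_trans (degX_pow_self 0 i) ?_
  have := Finset.mem_range.mp hi
  omega

lemma degAevalNe (jp : Polynomial ℝ) (i : Fin 3) (h : i ≠ 0) :
    MvPolynomial.degreeOf i (Polynomial.aeval (X 0 : MvPolynomial (Fin 3) ℝ) jp) = 0 := by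
  refine Nat.le_zero.mp ?_
  rw [Polynomial.aeval_eq_sum_range]
  refine le_trans (MvPolynomial.degreeOf_sum_le _ _ _) (Finset.sup_le fun t _ => ?_)
  rw [MvPolynomial.smul_eq_C_mul]
  refine le_trans (MvPolynomial.degreeOf_mul_le _ _ _) ?_
  rw [MvPolynomial.degreeOf_C, zero_add, degX_pow_ne h]

set_option maxHeartbeats 1000000 in
theorem master (k : ℕ) (hk : 1 ≤ k) (q : MvPolynomial (Fin 3) ℝ) (hq : memRT k 0 1 2 q)
    (hface : ∀ s : ℝ, s = 1 ∨ s = -1 → ∀ a < k, ∀ b < k,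
      (∫ y in (-1:ℝ)..1, ∫ z in (-1:ℝ)..1, ev3 q s y z * y ^ a * z ^ b) = 0)
    (hJ : ∀ j < k,
      (∫ x in (-1:ℝ)..1, ∫ y in (-1:ℝ)..1, ∫ z in (-1:ℝ)..1,
        ev3 q x y z * Jac (k - 1) x * y ^ j) = 0 ∧
      (∫ x in (-1:ℝ)..1, ∫ y in (-1:ℝ)..1, ∫ z in (-1:ℝ)..1,
        ev3 q x y z * Jac (k - 1) x * z ^ j) = 0)
    (hint : ∀ a b c : ℕ, a + 2 ≤ k → b < k → c < k →
      (∫ x in (-1:ℝ)..1, ∫ y in (-1:ℝ)..1, ∫ z in (-1:ℝ)..1,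
        ev3 q x y z * x ^ a * y ^ b * z ^ c) = 0) : q = 0 := by
  classical
  obtain ⟨p, cu, cw, hd0, hd1, hd2, hsplit⟩ := hq
  set P : Polynomial (MvPolynomial (Fin 2) ℝ) := MvPolynomial.finSuccEquiv ℝ 2 q with hP
  -- degree bounds on q
  have hq0 : MvPolynomial.degreeOf 0 q ≤ k + 1 := by
    rw [hsplit]
    refine le_trans (MvPolynomial.degreeOf_add_le _ _ _) (max_le (le_trans hd0 (by omega)) ?_)
    refine le_trans (MvPolynomial.degreeOf_mul_le _ _ _) ?_
    have h2 : MvPolynomial.degreeOf 0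
        ((∑ j ∈ Finset.range k, MvPolynomial.C (cu j) * X 1 ^ j)
          + ∑ j ∈ Finset.range k, MvPolynomial.C (cw j) * X 2 ^ j
          : MvPolynomial (Fin 3) ℝ) ≤ 0 :=
      le_trans (MvPolynomial.degreeOf_add_le _ _ _)
        (max_le (degS 0 1 cu 0 (by simp)) (degS 0 2 cw 0 (by simp)))
    have h1 := degX_pow_self (0 : Fin 3) (k + 1)
    omega
  have hq1 : MvPolynomial.degreeOf 1 q ≤ k - 1 := by
    rw [hsplit]
    refine le_trans (MvPolynomial.degreeOf_add_le _ _ _) (max_le hd1 ?_)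
    refine le_trans (MvPolynomial.degreeOf_mul_le _ _ _) ?_
    have h1 : MvPolynomial.degreeOf 1 ((X 0 : MvPolynomial (Fin 3) ℝ) ^ (k+1)) = 0 :=
      degX_pow_ne (by decide) _
    have h2 : MvPolynomial.degreeOf 1
        ((∑ j ∈ Finset.range k, MvPolynomial.C (cu j) * X 1 ^ j)
          + ∑ j ∈ Finset.range k, MvPolynomial.C (cw j) * X 2 ^ j
          : MvPolynomial (Fin 3) ℝ) ≤ k - 1 :=
      le_trans (MvPolynomial.degreeOf_add_le _ _ _)
        (max_le (degS 1 1 cu (k-1) (fun _ => le_rfl)) (degS 1 2 cw (k-1) (by simp)))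
    omega
  have hq2 : MvPolynomial.degreeOf 2 q ≤ k - 1 := by
    rw [hsplit]
    refine le_trans (MvPolynomial.degreeOf_add_le _ _ _) (max_le hd2 ?_)
    refine le_trans (MvPolynomial.degreeOf_mul_le _ _ _) ?_
    have h1 : MvPolynomial.degreeOf 2 ((X 0 : MvPolynomial (Fin 3) ℝ) ^ (k+1)) = 0 :=
      degX_pow_ne (by decide) _
    have h2 : MvPolynomial.degreeOf 2
        ((∑ j ∈ Finset.range k, MvPolynomial.C (cu j) * X 1 ^ j)
          + ∑ j ∈ Finset.range k, MvPolynomial.C (cw j) * X 2 ^ j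
          : MvPolynomial (Fin 3) ℝ) ≤ k - 1 :=
      le_trans (MvPolynomial.degreeOf_add_le _ _ _)
        (max_le (degS 2 1 cu (k-1) (by simp)) (degS 2 2 cw (k-1) (fun _ => le_rfl)))
    omega
  have hPnat : P.natDegree ≤ k + 1 := by
    rw [hP, MvPolynomial.natDegree_finSuccEquiv]; exact hq0
  have hPtop : ∀ i, k + 2 ≤ i → P.coeff i = 0 := fun i hi =>
    Polynomial.coeff_eq_zero_of_natDegree_lt (lt_of_le_of_lt hPnat (by omega))
  -- Step 1 : face vanishing
  have hface' : ∀ s : ℝ, s = 1 ∨ s = -1 → Polynomial.eval (MvPolynomial.C s) P = 0 := by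
    intro s hs
    set Ps : MvPolynomial (Fin 2) ℝ := Polynomial.eval (MvPolynomial.C s) P with hPs
    have link : ∀ y z : ℝ, MvPolynomial.eval ![y, z] Ps = ev3 q s y z := by
      intro y z
      rw [hPs, eval_poly_eval_C]
      have h1 : ev3 q s y z = MvPolynomial.eval (Fin.cons s ![y, z]) q := by
        unfold ev3; congr 1
      rw [h1]
      exact (MvPolynomial.eval_eq_eval_mv_eval' ![y, z] s q).symm
    have hPs0 : MvPolynomial.degreeOf 0 Ps ≤ k - 1 := by
      rw [hPs, Polynomial.eval_eq_sum_range]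
      refine le_trans (MvPolynomial.degreeOf_sum_le _ _ _) (Finset.sup_le fun i _ => ?_)
      refine le_trans (MvPolynomial.degreeOf_mul_le _ _ _) ?_
      rw [← map_pow, MvPolynomial.degreeOf_C, add_zero, hP]
      exact le_trans (MvPolynomial.degreeOf_coeff_finSuccEquiv q 0 i) hq1
    have hPs1 : MvPolynomial.degreeOf 1 Ps ≤ k - 1 := by
      rw [hPs, Polynomial.eval_eq_sum_range]
      refine le_trans (MvPolynomial.degreeOf_sum_le _ _ _) (Finset.sup_le fun i _ => ?_)
      refine le_trans (MvPolynomial.degreeOf_mul_le _ _ _) ?_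
      rw [← map_pow, MvPolynomial.degreeOf_C, add_zero, hP]
      exact le_trans (MvPolynomial.degreeOf_coeff_finSuccEquiv q 1 i) hq2
    have hsup : ∀ m ∈ Ps.support, m 0 < k ∧ m 1 < k := fun m hm =>
      ⟨lt_of_le_of_lt (MvPolynomial.degreeOf_le_iff.mp hPs0 m hm) (by omega),
        lt_of_le_of_lt (MvPolynomial.degreeOf_le_iff.mp hPs1 m hm) (by omega)⟩
    have hK : (∫ y in (-1:ℝ)..1, ∫ z in (-1:ℝ)..1, (MvPolynomial.eval ![y, z] Ps)^2) = 0 := by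
      have expand : ∀ y z : ℝ, (MvPolynomial.eval ![y, z] Ps)^2
          = ∑ m ∈ Ps.support,
            MvPolynomial.coeff m Ps * (ev3 q s y z * y ^ m 0 * z ^ m 1) := by
        intro y z
        rw [sq]
        nth_rewrite 2 [Ps.as_sum]
        rw [map_sum, Finset.mul_sum]
        refine Finset.sum_congr rfl fun m hm => ?_
        rw [MvPolynomial.eval_monomial, link,
          Finsupp.prod_fintype _ _ (fun i => pow_zero _), Fin.prod_univ_two]
        simp only [Matrix.cons_val_zero, Matrix.cons_val_one, Matrix.head_cons]
        ring
      simp only [expand]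
      have hcontz : ∀ (m : Fin 2 →₀ ℕ) (y : ℝ), Continuous fun z =>
          MvPolynomial.coeff m Ps * (ev3 q s y z * y ^ m 0 * z ^ m 1) := by
        intro m y
        exact continuous_const.mul
          (((contZ q s y).mul continuous_const).mul (continuous_pow _))
      have hconty : ∀ m : Fin 2 →₀ ℕ, Continuous fun y => ∫ z in (-1:ℝ)..1,
          MvPolynomial.coeff m Ps * (ev3 q s y z * y ^ m 0 * z ^ m 1) := by
        intro m
        apply intervalIntegral.continuous_parametric_intervalIntegral_of_continuous'
          (f := fun y z => MvPolynomial.coeff m Ps * (ev3 q s y z * y ^ m 0 * z ^ m 1))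
        exact continuous_const.mul
          (((contYZ q s).mul ((continuous_pow _).comp continuous_fst)).mul
            ((continuous_pow _).comp continuous_snd))
      have e1 : ∀ y : ℝ, (∫ z in (-1:ℝ)..1, ∑ m ∈ Ps.support,
          MvPolynomial.coeff m Ps * (ev3 q s y z * y ^ m 0 * z ^ m 1))
          = ∑ m ∈ Ps.support, ∫ z in (-1:ℝ)..1,
            MvPolynomial.coeff m Ps * (ev3 q s y z * y ^ m 0 * z ^ m 1) := fun y =>
        intervalIntegral.integral_finset_sum
          (fun m _ => (hcontz m y).intervalIntegrable _ _)
      simp only [e1]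
      rw [intervalIntegral.integral_finset_sum
        (fun m _ => (hconty m).intervalIntegrable _ _)]
      refine Finset.sum_eq_zero fun m hm => ?_
      have e2 : ∀ y : ℝ, (∫ z in (-1:ℝ)..1,
          MvPolynomial.coeff m Ps * (ev3 q s y z * y ^ m 0 * z ^ m 1))
          = MvPolynomial.coeff m Ps * ∫ z in (-1:ℝ)..1,
            ev3 q s y z * y ^ m 0 * z ^ m 1 := fun y =>
        intervalIntegral.integral_const_mul _ _
      simp only [e2]
      rw [intervalIntegral.integral_const_mul]
      rw [hface s hs (m 0) (hsup m hm).1 (m 1) (hsup m hm).2]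
      exact mul_zero _
    have hvanish := int2_zero (f := fun y z => (MvPolynomial.eval ![y, z] Ps)^2)
      (by exact (contEv2 Ps).pow 2) (fun x _ y _ => sq_nonneg _) hK
    apply mv_zero 2 Ps
    intro v hv
    have h : (MvPolynomial.eval ![v 0, v 1]) Ps ^ 2 = 0 := hvanish (v 0) (hv 0) (v 1) (hv 1)
    rw [vec2_eta] at h
    exact sq_eq_zero_iff.mp h
  -- parity sums
  have hs1 : ∑ i ∈ Finset.range (2 * (k + 3)), P.coeff i = 0 := by
    have h := hface' 1 (Or.inl rfl)
    rw [Polynomial.eval_eq_sum_range' (show P.natDegree < 2 * (k + 3) by omega)] at h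
    simpa using h
  have hsm1 : ∑ i ∈ Finset.range (2 * (k + 3)), ((-1:ℝ) ^ i) • P.coeff i = 0 := by
    have h := hface' (-1) (Or.inr rfl)
    rw [Polynomial.eval_eq_sum_range' (show P.natDegree < 2 * (k + 3) by omega)] at h
    rw [← h]
    refine Finset.sum_congr rfl fun i _ => ?_
    rw [← map_pow, mul_comm, MvPolynomial.C_mul']
  set Ev : MvPolynomial (Fin 2) ℝ := ∑ t ∈ Finset.range (k + 3), P.coeff (2 * t) with hEvDef
  set Od : MvPolynomial (Fin 2) ℝ := ∑ t ∈ Finset.range (k + 3), P.coeff (2 * t + 1) with hOdDef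
  have hEO1 : Ev + Od = 0 := by rw [hEvDef, hOdDef, ← sum_even_odd]; exact hs1
  have hEO2 : Ev - Od = 0 := by
    have h := hsm1
    rw [sum_even_odd (fun i => ((-1:ℝ) ^ i) • P.coeff i) (k + 3)] at h
    have e1 : ∀ t, ((-1:ℝ) ^ (2 * t)) • P.coeff (2 * t) = P.coeff (2 * t) := fun t => by
      rw [pow_mul]; norm_num
    have e2 : ∀ t, ((-1:ℝ) ^ (2 * t + 1)) • P.coeff (2 * t + 1) = -P.coeff (2 * t + 1) :=
      fun t => by rw [pow_succ, pow_mul]; norm_num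
    simp only [e1, e2] at h
    rw [Finset.sum_neg_distrib] at h
    rw [sub_eq_add_neg, hEvDef, hOdDef]
    exact h
  have hEv : Ev = 0 := by
    have h2 : Ev + Ev = 0 := by
      have : Ev + Ev = (Ev + Od) + (Ev - Od) := by abel
      rw [this, hEO1, hEO2, add_zero]
    rw [← two_smul ℝ Ev] at h2
    have h3 : ((2:ℝ)⁻¹) • ((2:ℝ) • Ev) = 0 := by rw [h2, smul_zero]
    rwa [inv_smul_smul₀ (by norm_num : (2:ℝ) ≠ 0)] at h3
  have hOd : Od = 0 := by
    have := hEO1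
    rw [hEv, zero_add] at this
    exact this
  -- Step 2 : division by X^2 - 1
  set SS : ℕ → MvPolynomial (Fin 2) ℝ :=
    fun i => ∑ t ∈ Finset.range (k + 3), P.coeff (i + 2 + 2 * t) with hSS
  have hSS0 : ∀ i, k ≤ i → SS i = 0 := by
    intro i hi
    exact Finset.sum_eq_zero fun t _ => hPtop _ (by omega)
  have hSSrec : ∀ i, SS i = P.coeff (i + 2) + SS (i + 2) := by
    intro i
    have e1 : SS i = (∑ t ∈ Finset.range (k + 2), P.coeff (i + 2 + 2 * (t + 1)))
        + P.coeff (i + 2 + 2 * 0) := by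
      rw [hSS]; exact Finset.sum_range_succ' _ _
    have e2 : SS (i + 2) = (∑ t ∈ Finset.range (k + 2), P.coeff (i + 2 + 2 + 2 * t))
        + P.coeff (i + 2 + 2 + 2 * (k + 2)) := by
      rw [hSS]; exact Finset.sum_range_succ _ _
    rw [e1, e2, hPtop (i + 2 + 2 + 2 * (k + 2)) (by omega), add_zero,
      show i + 2 + 2 * 0 = i + 2 by ring, add_comm]
    congr 1
    exact Finset.sum_congr rfl fun t _ => by congr 1; ring
  have hSSbase0 : SS 0 = - P.coeff 0 := by
    have e1 : Ev = (∑ t ∈ Finset.range (k + 2), P.coeff (2 * (t + 1))) + P.coeff (2 * 0) := by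
      rw [hEvDef]; exact Finset.sum_range_succ' _ _
    have e2 : SS 0 = (∑ t ∈ Finset.range (k + 2), P.coeff (0 + 2 + 2 * t))
        + P.coeff (0 + 2 + 2 * (k + 2)) := by
      rw [hSS]; exact Finset.sum_range_succ _ _
    have e3 : (∑ t ∈ Finset.range (k + 2), P.coeff (0 + 2 + 2 * t))
        = ∑ t ∈ Finset.range (k + 2), P.coeff (2 * (t + 1)) :=
      Finset.sum_congr rfl fun t _ => by congr 1; ring
    have := hEv
    rw [e1] at this
    rw [e2, e3, hPtop (0 + 2 + 2 * (k + 2)) (by omega), add_zero]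
    have h0 : (2 : ℕ) * 0 = 0 := by ring
    rw [h0] at this
    exact eq_neg_of_add_eq_zero_left this
  have hSSbase1 : SS 1 = - P.coeff 1 := by
    have e1 : Od = (∑ t ∈ Finset.range (k + 2), P.coeff (2 * (t + 1) + 1))
        + P.coeff (2 * 0 + 1) := by
      rw [hOdDef]; exact Finset.sum_range_succ' _ _
    have e2 : SS 1 = (∑ t ∈ Finset.range (k + 2), P.coeff (1 + 2 + 2 * t))
        + P.coeff (1 + 2 + 2 * (k + 2)) := by
      rw [hSS]; exact Finset.sum_range_succ _ _
    have e3 : (∑ t ∈ Finset.range (k + 2), P.coeff (1 + 2 + 2 * t))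
        = ∑ t ∈ Finset.range (k + 2), P.coeff (2 * (t + 1) + 1) :=
      Finset.sum_congr rfl fun t _ => by congr 1; ring
    have := hOd
    rw [e1] at this
    rw [e2, e3, hPtop (1 + 2 + 2 * (k + 2)) (by omega), add_zero]
    have h0 : (2 : ℕ) * 0 + 1 = 1 := by ring
    rw [h0] at this
    exact eq_neg_of_add_eq_zero_left this
  set rP : Polynomial (MvPolynomial (Fin 2) ℝ) :=
    ∑ i ∈ Finset.range k, Polynomial.C (SS i) * Polynomial.X ^ i with hrP
  have hrPcoeff : ∀ i, rP.coeff i = if i < k then SS i else 0 := by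
    intro i
    rw [hrP, Polynomial.finset_sum_coeff]
    have e : ∀ j ∈ Finset.range k,
        (Polynomial.C (SS j) * Polynomial.X ^ j).coeff i
          = if j = i then SS j else 0 := fun j _ => by
      rw [Polynomial.coeff_C_mul, Polynomial.coeff_X_pow]
      by_cases h : i = j
      · subst h; simp
      · rw [if_neg h, if_neg (fun hh => h hh.symm), mul_zero]
    rw [Finset.sum_congr rfl e, Finset.sum_ite_eq' (Finset.range k) i SS]
    simp [Finset.mem_range]
  have hdiv : (Polynomial.X ^ 2 - 1) * rP = P := by
    refine Polynomial.ext fun i => ?_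
    rw [sub_mul, one_mul, Polynomial.coeff_sub,
      mul_comm ((Polynomial.X : Polynomial (MvPolynomial (Fin 2) ℝ)) ^ 2) rP,
      Polynomial.coeff_mul_X_pow', hrPcoeff, hrPcoeff]
    match i with
    | 0 =>
        rw [if_neg (by omega), if_pos (by omega), zero_sub, hSSbase0, neg_neg]
    | 1 =>
        rw [if_neg (by omega), zero_sub]
        by_cases h1k : 1 < k
        · rw [if_pos h1k, hSSbase1, neg_neg]
        · rw [if_neg h1k]
          have h := hSSbase1
          rw [hSS0 1 (by omega)] at h
          rw [neg_zero, eq_comm, ← neg_eq_zero, ← h]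
    | (i + 2) =>
        rw [if_pos (by omega)]
        have hsub : i + 2 - 2 = i := by omega
        rw [hsub]
        by_cases h1 : i < k
        · rw [if_pos h1]
          by_cases h2 : i + 2 < k
          · rw [if_pos h2, hSSrec i]; ring
          · rw [if_neg h2, sub_zero, hSSrec i, hSS0 (i + 2) (by omega), add_zero]
        · rw [if_neg h1, if_neg (by omega), sub_zero, eq_comm]
          exact hPtop _ (by omega)
  set r : MvPolynomial (Fin 3) ℝ := (MvPolynomial.finSuccEquiv ℝ 2).symm rP with hr
  have hFr : MvPolynomial.finSuccEquiv ℝ 2 r = rP := by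
    rw [hr]; exact (MvPolynomial.finSuccEquiv ℝ 2).apply_symm_apply rP
  have hqr : q = ((X 0 : MvPolynomial (Fin 3) ℝ) ^ 2 - 1) * r := by
    apply (MvPolynomial.finSuccEquiv ℝ 2).injective
    rw [map_mul, map_sub, map_pow, map_one, MvPolynomial.finSuccEquiv_X_zero, hFr]
    exact hdiv.symm
  have hrsum : r = ∑ i ∈ Finset.range k,
      MvPolynomial.rename Fin.succ (SS i) * (X 0 : MvPolynomial (Fin 3) ℝ) ^ i := by
    apply (MvPolynomial.finSuccEquiv ℝ 2).injective
    rw [hFr, map_sum, hrP]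
    exact (Finset.sum_congr rfl fun i _ => by
      rw [map_mul, embC, map_pow, MvPolynomial.finSuccEquiv_X_zero]).symm
  -- coefficient degree bounds
  have hSSdeg1 : ∀ i, MvPolynomial.degreeOf 0 (SS i) ≤ k - 1 := by
    intro i
    rw [hSS]
    refine le_trans (MvPolynomial.degreeOf_sum_le _ _ _) (Finset.sup_le fun t _ => ?_)
    rw [hP]
    exact le_trans (MvPolynomial.degreeOf_coeff_finSuccEquiv q 0 _) hq1
  have hSSdeg2 : ∀ i, MvPolynomial.degreeOf 1 (SS i) ≤ k - 1 := by
    intro i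
    rw [hSS]
    refine le_trans (MvPolynomial.degreeOf_sum_le _ _ _) (Finset.sup_le fun t _ => ?_)
    rw [hP]
    exact le_trans (MvPolynomial.degreeOf_coeff_finSuccEquiv q 1 _) hq2
  -- top coefficient structure
  set B : MvPolynomial (Fin 2) ℝ :=
    (∑ j ∈ Finset.range k, MvPolynomial.C (cu j) * X 0 ^ j) +
      ∑ j ∈ Finset.range k, MvPolynomial.C (cw j) * X 1 ^ j with hB
  have hFS : MvPolynomial.finSuccEquiv ℝ 2
      ((∑ j ∈ Finset.range k, MvPolynomial.C (cu j) * X 1 ^ j)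
        + ∑ j ∈ Finset.range k, MvPolynomial.C (cw j) * X 2 ^ j)
      = Polynomial.C B := by
    have hF1 : MvPolynomial.finSuccEquiv ℝ 2
        (∑ j ∈ Finset.range k, MvPolynomial.C (cu j) * X 1 ^ j)
        = Polynomial.C (∑ j ∈ Finset.range k, MvPolynomial.C (cu j) * X 0 ^ j) := by
      rw [map_sum, map_sum]
      refine Finset.sum_congr rfl fun j _ => ?_
      rw [map_mul, map_pow, FC, ← succ_zero_fin2, MvPolynomial.finSuccEquiv_X_succ,
        ← map_pow, ← map_mul]
    have hF2 : MvPolynomial.finSuccEquiv ℝ 2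
        (∑ j ∈ Finset.range k, MvPolynomial.C (cw j) * X 2 ^ j)
        = Polynomial.C (∑ j ∈ Finset.range k, MvPolynomial.C (cw j) * X 1 ^ j) := by
      rw [map_sum, map_sum]
      refine Finset.sum_congr rfl fun j _ => ?_
      rw [map_mul, map_pow, FC, ← succ_one_fin2, MvPolynomial.finSuccEquiv_X_succ,
        ← map_pow, ← map_mul]
    rw [map_add, hF1, hF2, hB, map_add]
  have hSStop : SS (k - 1) = B := by
    have hc : SS (k - 1) = P.coeff (k + 1) := by
      have hSSval : SS (k - 1) = ∑ t ∈ Finset.range (k + 3), P.coeff (k - 1 + 2 + 2 * t) := by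
        simp only [hSS]
      rw [hSSval, Finset.sum_eq_single 0 (fun t _ ht => hPtop _ (by omega))
        (fun h => absurd (Finset.mem_range.mpr (by omega)) h)]
      congr 1
      omega
    have hFq : P = MvPolynomial.finSuccEquiv ℝ 2 p + Polynomial.C B * Polynomial.X ^ (k + 1) := by
      rw [hP, hsplit, map_add, map_mul, map_pow, MvPolynomial.finSuccEquiv_X_zero, hFS,
        mul_comm]
    have hp0 : (MvPolynomial.finSuccEquiv ℝ 2 p).coeff (k + 1) = 0 :=
      Polynomial.coeff_eq_zero_of_natDegree_lt
        (by rw [MvPolynomial.natDegree_finSuccEquiv]; omega)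
    rw [hc, hFq, Polynomial.coeff_add, hp0, zero_add, Polynomial.coeff_C_mul,
      Polynomial.coeff_X_pow, if_pos rfl, mul_one]
  -- Jacobi machinery
  set lam : ℝ := (jacPoly (k - 1)).coeff (k - 1) with hlam
  have hlampos : 0 < lam := jacPoly_coeff_pos _
  set jacX : MvPolynomial (Fin 3) ℝ := Polynomial.aeval (X 0) (jacPoly (k - 1)) with hjacX
  set lowP : Polynomial ℝ := jacPoly (k - 1) - Polynomial.C lam * Polynomial.X ^ (k - 1)
    with hlowP
  have hlow_coeff : ∀ m, k - 1 ≤ m → lowP.coeff m = 0 := by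
    intro m hm
    rw [hlowP, Polynomial.coeff_sub, Polynomial.coeff_C_mul, Polynomial.coeff_X_pow]
    by_cases h : m = k - 1
    · subst h; rw [if_pos rfl, mul_one, hlam, sub_self]
    · rw [if_neg h, mul_zero, sub_zero]
      exact Polynomial.coeff_eq_zero_of_natDegree_lt
        (lt_of_le_of_lt (jacPoly_natDegree_le _) (by omega))
  have hlownat : lowP.natDegree ≤ k - 2 := by
    refine Polynomial.natDegree_le_iff_coeff_eq_zero.mpr fun m hm => hlow_coeff m (by omega)
  set low : MvPolynomial (Fin 3) ℝ := Polynomial.aeval (X 0) lowP with hlow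
  have hXtop : ((X 0 : MvPolynomial (Fin 3) ℝ)) ^ (k - 1) = lam⁻¹ • (jacX - low) := by
    have h2 : jacX - low = lam • ((X 0 : MvPolynomial (Fin 3) ℝ)) ^ (k - 1) := by
      rw [hjacX, hlow, ← map_sub]
      have h3 : jacPoly (k - 1) - lowP = Polynomial.C lam * Polynomial.X ^ (k - 1) := by
        rw [hlowP]; ring
      rw [h3, map_mul, map_pow, Polynomial.aeval_X, Polynomial.aeval_C,
        MvPolynomial.algebraMap_eq, MvPolynomial.C_mul']
    rw [h2, smul_smul, inv_mul_cancel₀ hlampos.ne', one_smul]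
  -- generator set
  set G : Set (MvPolynomial (Fin 3) ℝ) :=
    {g | ∃ a b c : ℕ, a + 2 ≤ k ∧ b < k ∧ c < k ∧ g = X 0 ^ a * X 1 ^ b * X 2 ^ c}
      ∪ {g | ∃ j, j < k ∧ g = jacX * X 1 ^ j}
      ∪ {g | ∃ j, j < k ∧ g = jacX * X 2 ^ j} with hG
  have hjacEv : ∀ x y z : ℝ, MvPolynomial.eval ![x, y, z] jacX = Jac (k - 1) x := by
    intro x y z
    rw [hjacX, ev3_aevalX0]
    rw [show (![x, y, z] : Fin 3 → ℝ) 0 = x from rfl, jacPoly_eval]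
  have hGzero : ∀ g ∈ G, T3 (q * g) = 0 := by
    intro g hg
    rcases hg with (h | h) | h
    · obtain ⟨a, b, c, ha, hb, hc, rfl⟩ := h
      have hpt : ∀ x y z : ℝ, ev3 (q * (X 0 ^ a * X 1 ^ b * X 2 ^ c)) x y z
          = ev3 q x y z * x ^ a * y ^ b * z ^ c := by
        intro x y z
        simp only [ev3, map_mul, map_pow, MvPolynomial.eval_X]
        norm_num [Matrix.cons_val_zero, Matrix.cons_val_one, Matrix.head_cons, Matrix.cons_val_two]
        ring
      unfold T3
      simp only [hpt]
      exact hint a b c ha hb hc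
    · obtain ⟨j, hj, rfl⟩ := h
      have hpt : ∀ x y z : ℝ, ev3 (q * (jacX * X 1 ^ j)) x y z
          = ev3 q x y z * Jac (k - 1) x * y ^ j := by
        intro x y z
        simp only [ev3, map_mul, map_pow, MvPolynomial.eval_X]
        rw [show MvPolynomial.eval ![x, y, z] jacX = Jac (k - 1) x from hjacEv x y z]
        norm_num [Matrix.cons_val_one, Matrix.head_cons]
        ring
      unfold T3
      simp only [hpt]
      exact (hJ j hj).1
    · obtain ⟨j, hj, rfl⟩ := h
      have hpt : ∀ x y z : ℝ, ev3 (q * (jacX * X 2 ^ j)) x y z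
          = ev3 q x y z * Jac (k - 1) x * z ^ j := by
        intro x y z
        simp only [ev3, map_mul, map_pow, MvPolynomial.eval_X]
        rw [show MvPolynomial.eval ![x, y, z] jacX = Jac (k - 1) x from hjacEv x y z]
        norm_num [Matrix.cons_val_zero, Matrix.cons_val_one, Matrix.head_cons, Matrix.cons_val_two]
        ring
      unfold T3
      simp only [hpt]
      exact (hJ j hj).2
  -- span membership
  have hrspan : r ∈ Submodule.span ℝ G := by
    rw [hrsum]
    refine Submodule.sum_mem _ fun i hi => ?_
    rw [Finset.mem_range] at hi
    by_cases hik : i + 2 ≤ k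
    · -- low-order coefficients: box monomials
      have hbox := mem_span_box (a := k - 2) (b := k - 1) (c := k - 1)
        (p := MvPolynomial.rename Fin.succ (SS i) * X 0 ^ i) ?_ ?_ ?_
      · refine Submodule.span_mono ?_ hbox
        rintro g ⟨a', b', c', ha', hb', hc', rfl⟩
        exact Or.inl (Or.inl ⟨a', b', c', by omega, by omega, by omega, rfl⟩)
      · refine le_trans (MvPolynomial.degreeOf_mul_le _ _ _) ?_
        rw [deg0_emb, zero_add]
        exact le_trans (degX_pow_self 0 i) (by omega)
      · refine le_trans (MvPolynomial.degreeOf_mul_le _ _ _) ?_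
        rw [degX_pow_ne (by decide), add_zero,
          show (1 : Fin 3) = Fin.succ (0 : Fin 2) from succ_zero_fin2.symm, deg_emb_succ]
        exact hSSdeg1 i
      · refine le_trans (MvPolynomial.degreeOf_mul_le _ _ _) ?_
        rw [degX_pow_ne (by decide), add_zero,
          show (2 : Fin 3) = Fin.succ (1 : Fin 2) from succ_one_fin2.symm, deg_emb_succ]
        exact hSSdeg2 i
    · -- top coefficient
      have hieq : i = k - 1 := by omega
      subst hieq
      rw [hSStop]
      have hrB : MvPolynomial.rename Fin.succ B
          = (∑ j ∈ Finset.range k, MvPolynomial.C (cu j) * X 1 ^ j)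
            + ∑ j ∈ Finset.range k, MvPolynomial.C (cw j) * X 2 ^ j := by
        rw [hB, map_add, map_sum, map_sum]
        congr 1
        · refine Finset.sum_congr rfl fun j _ => ?_
          rw [map_mul, map_pow, MvPolynomial.rename_C, MvPolynomial.rename_X, succ_zero_fin2]
        · refine Finset.sum_congr rfl fun j _ => ?_
          rw [map_mul, map_pow, MvPolynomial.rename_C, MvPolynomial.rename_X, succ_one_fin2]
      rw [hrB, hXtop]
      have hsplit2 : ((∑ j ∈ Finset.range k, MvPolynomial.C (cu j) * X 1 ^ j)
            + ∑ j ∈ Finset.range k, MvPolynomial.C (cw j) * X 2 ^ j)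
            * (lam⁻¹ • (jacX - low))
          = lam⁻¹ • (((∑ j ∈ Finset.range k, MvPolynomial.C (cu j) * X 1 ^ j)
              + ∑ j ∈ Finset.range k, MvPolynomial.C (cw j) * X 2 ^ j) * jacX)
            - lam⁻¹ • (((∑ j ∈ Finset.range k, MvPolynomial.C (cu j) * X 1 ^ j)
              + ∑ j ∈ Finset.range k, MvPolynomial.C (cw j) * X 2 ^ j) * low) := by
        rw [mul_smul_comm, mul_sub, smul_sub]
      rw [hsplit2]
      refine Submodule.sub_mem _ (Submodule.smul_mem _ _ ?_) (Submodule.smul_mem _ _ ?_)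
      · -- jacX part
        rw [add_mul, Finset.sum_mul, Finset.sum_mul]
        refine Submodule.add_mem _ (Submodule.sum_mem _ fun j hj => ?_)
          (Submodule.sum_mem _ fun j hj => ?_)
        · have he : MvPolynomial.C (cu j) * X 1 ^ j * jacX = cu j • (jacX * X 1 ^ j) := by
            rw [MvPolynomial.smul_eq_C_mul]; ring
          rw [he]
          exact Submodule.smul_mem _ _ (Submodule.subset_span
            (Or.inl (Or.inr ⟨j, Finset.mem_range.mp hj, rfl⟩)))
        · have he : MvPolynomial.C (cw j) * X 2 ^ j * jacX = cw j • (jacX * X 2 ^ j) := by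
            rw [MvPolynomial.smul_eq_C_mul]; ring
          rw [he]
          exact Submodule.smul_mem _ _ (Submodule.subset_span
            (Or.inr ⟨j, Finset.mem_range.mp hj, rfl⟩))
      · -- low part
        by_cases hk1 : k = 1
        · have h0 : k - 1 = 0 := by omega
          have hlowP0 : lowP = 0 := by
            rw [hlowP, hlam, h0, pow_zero, mul_one, sub_eq_zero]
            exact Polynomial.eq_C_of_natDegree_le_zero
              (le_trans (jacPoly_natDegree_le 0) le_rfl)
          rw [hlow, hlowP0, map_zero, mul_zero]
          exact Submodule.zero_mem _
        · have hk2 : 2 ≤ k := by omega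
          have hbox := mem_span_box (a := k - 2) (b := k - 1) (c := k - 1)
            (p := ((∑ j ∈ Finset.range k, MvPolynomial.C (cu j) * X 1 ^ j)
              + ∑ j ∈ Finset.range k, MvPolynomial.C (cw j) * X 2 ^ j) * low) ?_ ?_ ?_
          · refine Submodule.span_mono ?_ hbox
            rintro g ⟨a', b', c', ha', hb', hc', rfl⟩
            exact Or.inl (Or.inl ⟨a', b', c', by omega, by omega, by omega, rfl⟩)
          · refine le_trans (MvPolynomial.degreeOf_mul_le _ _ _) ?_
            have hA : MvPolynomial.degreeOf 0
                ((∑ j ∈ Finset.range k, MvPolynomial.C (cu j) * X 1 ^ j)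
                  + ∑ j ∈ Finset.range k, MvPolynomial.C (cw j) * X 2 ^ j
                  : MvPolynomial (Fin 3) ℝ) ≤ 0 :=
              le_trans (MvPolynomial.degreeOf_add_le _ _ _)
                (max_le (degS 0 1 cu 0 (by simp)) (degS 0 2 cw 0 (by simp)))
            have hB0 : MvPolynomial.degreeOf 0 low ≤ k - 2 := by
              rw [hlow]; exact degAeval0 _ _ hlownat
            omega
          · refine le_trans (MvPolynomial.degreeOf_mul_le _ _ _) ?_
            have hA : MvPolynomial.degreeOf 1
                ((∑ j ∈ Finset.range k, MvPolynomial.C (cu j) * X 1 ^ j)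
                  + ∑ j ∈ Finset.range k, MvPolynomial.C (cw j) * X 2 ^ j
                  : MvPolynomial (Fin 3) ℝ) ≤ k - 1 :=
              le_trans (MvPolynomial.degreeOf_add_le _ _ _)
                (max_le (degS 1 1 cu (k-1) (fun _ => le_rfl)) (degS 1 2 cw (k-1) (by simp)))
            have hB0 : MvPolynomial.degreeOf 1 low = 0 := by
              rw [hlow]; exact degAevalNe _ _ (by decide)
            omega
          · refine le_trans (MvPolynomial.degreeOf_mul_le _ _ _) ?_
            have hA : MvPolynomial.degreeOf 2
                ((∑ j ∈ Finset.range k, MvPolynomial.C (cu j) * X 1 ^ j)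
                  + ∑ j ∈ Finset.range k, MvPolynomial.C (cw j) * X 2 ^ j
                  : MvPolynomial (Fin 3) ℝ) ≤ k - 1 :=
              le_trans (MvPolynomial.degreeOf_add_le _ _ _)
                (max_le (degS 2 1 cu (k-1) (by simp)) (degS 2 2 cw (k-1) (fun _ => le_rfl)))
            have hB0 : MvPolynomial.degreeOf 2 low = 0 := by
              rw [hlow]; exact degAevalNe _ _ (by decide)
            omega
  -- conclusion
  have hT : T3 (q * r) = 0 := span_ortho q G hGzero hrspan
  have hsign : ∀ x y z : ℝ, ev3 (q * r) x y z = (x ^ 2 - 1) * (ev3 r x y z) ^ 2 := by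
    intro x y z
    rw [hqr]
    simp only [ev3, map_mul, map_sub, map_pow, map_one, MvPolynomial.eval_X,
      Matrix.cons_val_zero]
    ring
  have hneg : (∫ x in (-1:ℝ)..1, ∫ y in (-1:ℝ)..1, ∫ z in (-1:ℝ)..1,
      (1 - x ^ 2) * (ev3 r x y z) ^ 2) = 0 := by
    have e0 : ∀ x y z : ℝ, (1 - x ^ 2) * (ev3 r x y z) ^ 2 = - ev3 (q * r) x y z := by
      intro x y z; rw [hsign]; ring
    simp only [e0, intervalIntegral.integral_neg]
    rw [neg_eq_zero]
    exact hT
  have hF0 := int3_zero (f := fun x y z => (1 - x ^ 2) * (ev3 r x y z) ^ 2)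
    ((continuous_const.sub ((continuous_fst).pow 2)).mul ((contEv3' r).pow 2))
    (fun x hx y _ z _ => mul_nonneg (by nlinarith [hx.1, hx.2]) (sq_nonneg _)) hneg
  have hrzero : r = 0 := by
    apply mv_zero 3 r
    intro v hv
    have h := hF0 (v 0) (hv 0) (v 1) (hv 1) (v 2) (hv 2)
    have h1 : (1 : ℝ) - (v 0) ^ 2 ≠ 0 := by
      have := hv 0
      nlinarith [this.1, this.2]
    have h2 := (mul_eq_zero.mp h).resolve_left h1
    have h3 : ev3 r (v 0) (v 1) (v 2) = 0 := sq_eq_zero_iff.mp h2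
    unfold ev3 at h3
    rw [vec3_eta] at h3
    exact h3
  rw [hqr, hrzero, mul_zero]

lemma contEv3v (q : MvPolynomial (Fin 3) ℝ) {α : Type*} [TopologicalSpace α]
    {u v w : α → ℝ} (hu : Continuous u) (hv : Continuous v) (hw : Continuous w) :
    Continuous fun p => ev3 q (u p) (v p) (w p) := by
  unfold ev3
  have hvec : Continuous fun p => (![u p, v p, w p] : Fin 3 → ℝ) := by
    refine continuous_pi fun i => ?_
    fin_cases i
    · exact hu
    · exact hv
    · exact hw
  exact (MvPolynomial.continuous_eval q).comp hvec

lemma contJac (l : ℕ) : Continuous (Jac l) := by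
  have h : Jac l = fun x => Polynomial.eval x (jacPoly l) := by
    funext x; rw [jacPoly_eval]
  rw [h]
  exact (jacPoly l).continuous

lemma swap_outer {f : ℝ → ℝ → ℝ → ℝ}
    (hc : Continuous fun p : ℝ × ℝ × ℝ => f p.1 p.2.1 p.2.2) :
    (∫ x in (-1:ℝ)..1, ∫ y in (-1:ℝ)..1, ∫ z in (-1:ℝ)..1, f x y z)
      = ∫ y in (-1:ℝ)..1, ∫ x in (-1:ℝ)..1, ∫ z in (-1:ℝ)..1, f x y z := by
  apply swapII (f := fun x y => ∫ z in (-1:ℝ)..1, f x y z)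
  apply intervalIntegral.continuous_parametric_intervalIntegral_of_continuous'
    (f := fun p : ℝ × ℝ => fun z => f p.1 p.2 z)
  exact hc.comp ((continuous_fst.comp continuous_fst).prodMk
    ((continuous_snd.comp continuous_fst).prodMk continuous_snd))

lemma rot3 {f : ℝ → ℝ → ℝ → ℝ}
    (hc : Continuous fun p : ℝ × ℝ × ℝ => f p.1 p.2.1 p.2.2) :
    (∫ x in (-1:ℝ)..1, ∫ y in (-1:ℝ)..1, ∫ z in (-1:ℝ)..1, f x y z)
      = ∫ y in (-1:ℝ)..1, ∫ z in (-1:ℝ)..1, ∫ x in (-1:ℝ)..1, f x y z := by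
  rw [swap_outer hc]
  refine intervalIntegral.integral_congr fun y _ => ?_
  apply swapII (f := fun x z => f x y z)
  exact hc.comp (continuous_fst.prodMk (continuous_const.prodMk continuous_snd))

lemma rename_sumCX (f : Fin 3 → Fin 3) (c : ℕ → ℝ) (v : Fin 3) (k : ℕ) :
    MvPolynomial.rename f (∑ j ∈ Finset.range k, MvPolynomial.C (c j) * X v ^ j)
      = ∑ j ∈ Finset.range k, MvPolynomial.C (c j) * X (f v) ^ j := by
  rw [map_sum]
  exact Finset.sum_congr rfl fun j _ => by
    rw [map_mul, map_pow, MvPolynomial.rename_C, MvPolynomial.rename_X]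

lemma contMulPow {α : Type*} [TopologicalSpace α] {g : α → ℝ} (hg : Continuous g)
    {u : α → ℝ} (hu : Continuous u) (n : ℕ) : Continuous fun p => g p * u p ^ n :=
  hg.mul (hu.pow n)

theorem enriched_RT_unisolvence' (k : ℕ) (hk : 1 ≤ k)
    (q1 q2 q3 : MvPolynomial (Fin 3) ℝ)
    (hq1 : memRT k 0 1 2 q1) (hq2 : memRT k 1 2 0 q2) (hq3 : memRT k 2 0 1 q3)
    (hface1 : ∀ s : ℝ, s = 1 ∨ s = -1 → ∀ a < k, ∀ b < k,
      (∫ η in (-1 : ℝ)..1, ∫ ζ in (-1 : ℝ)..1, ev3 q1 s η ζ * η ^ a * ζ ^ b) = 0)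
    (hface2 : ∀ s : ℝ, s = 1 ∨ s = -1 → ∀ a < k, ∀ b < k,
      (∫ ξ in (-1 : ℝ)..1, ∫ ζ in (-1 : ℝ)..1, ev3 q2 ξ s ζ * ξ ^ a * ζ ^ b) = 0)
    (hface3 : ∀ s : ℝ, s = 1 ∨ s = -1 → ∀ a < k, ∀ b < k,
      (∫ ξ in (-1 : ℝ)..1, ∫ η in (-1 : ℝ)..1, ev3 q3 ξ η s * ξ ^ a * η ^ b) = 0)
    (hJ1 : ∀ j < k,
      (∫ ξ in (-1 : ℝ)..1, ∫ η in (-1 : ℝ)..1, ∫ ζ in (-1 : ℝ)..1,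
        ev3 q1 ξ η ζ * Jac (k - 1) ξ * η ^ j) = 0 ∧
      (∫ ξ in (-1 : ℝ)..1, ∫ η in (-1 : ℝ)..1, ∫ ζ in (-1 : ℝ)..1,
        ev3 q1 ξ η ζ * Jac (k - 1) ξ * ζ ^ j) = 0)
    (hJ2 : ∀ j < k,
      (∫ ξ in (-1 : ℝ)..1, ∫ η in (-1 : ℝ)..1, ∫ ζ in (-1 : ℝ)..1,
        ev3 q2 ξ η ζ * Jac (k - 1) η * ξ ^ j) = 0 ∧
      (∫ ξ in (-1 : ℝ)..1, ∫ η in (-1 : ℝ)..1, ∫ ζ in (-1 : ℝ)..1,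
        ev3 q2 ξ η ζ * Jac (k - 1) η * ζ ^ j) = 0)
    (hJ3 : ∀ j < k,
      (∫ ξ in (-1 : ℝ)..1, ∫ η in (-1 : ℝ)..1, ∫ ζ in (-1 : ℝ)..1,
        ev3 q3 ξ η ζ * Jac (k - 1) ζ * ξ ^ j) = 0 ∧
      (∫ ξ in (-1 : ℝ)..1, ∫ η in (-1 : ℝ)..1, ∫ ζ in (-1 : ℝ)..1,
        ev3 q3 ξ η ζ * Jac (k - 1) ζ * η ^ j) = 0)
    (hint1 : ∀ a b c : ℕ, a + 2 ≤ k → b < k → c < k →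
      (∫ ξ in (-1 : ℝ)..1, ∫ η in (-1 : ℝ)..1, ∫ ζ in (-1 : ℝ)..1,
        ev3 q1 ξ η ζ * ξ ^ a * η ^ b * ζ ^ c) = 0)
    (hint2 : ∀ a b c : ℕ, a < k → b + 2 ≤ k → c < k →
      (∫ ξ in (-1 : ℝ)..1, ∫ η in (-1 : ℝ)..1, ∫ ζ in (-1 : ℝ)..1,
        ev3 q2 ξ η ζ * ξ ^ a * η ^ b * ζ ^ c) = 0)
    (hint3 : ∀ a b c : ℕ, a < k → b < k → c + 2 ≤ k →
      (∫ ξ in (-1 : ℝ)..1, ∫ η in (-1 : ℝ)..1, ∫ ζ in (-1 : ℝ)..1,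
        ev3 q3 ξ η ζ * ξ ^ a * η ^ b * ζ ^ c) = 0) :
    q1 = 0 ∧ q2 = 0 ∧ q3 = 0 := by
  refine ⟨master k hk q1 hq1 hface1 hJ1 hint1, ?_, ?_⟩
  · -- second component
    set σ : Equiv.Perm (Fin 3) := Equiv.swap 0 1 with hσ
    have hσ0 : σ 0 = 1 := Equiv.swap_apply_left 0 1
    have hσ1 : σ 1 = 0 := Equiv.swap_apply_right 0 1
    have hσ2 : σ 2 = 2 := Equiv.swap_apply_of_ne_of_ne (by decide) (by decide)
    set q2' : MvPolynomial (Fin 3) ℝ := MvPolynomial.rename σ q2 with hq2'def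
    have hev : ∀ x y z : ℝ, ev3 q2' x y z = ev3 q2 y x z := by
      intro x y z
      rw [hq2'def]
      unfold ev3
      rw [MvPolynomial.eval_rename,
        show (![x, y, z] ∘ ⇑σ) = ![y, x, z] from by
          funext i; fin_cases i <;> simp [hσ0, hσ1, hσ2]]
    have hmem : memRT k 0 1 2 q2' := by
      obtain ⟨p, cu, cw, h0, h1, h2, heq⟩ := hq2
      refine ⟨MvPolynomial.rename σ p, cw, cu, ?_, ?_, ?_, ?_⟩
      · rw [← hσ1, MvPolynomial.degreeOf_rename_of_injective σ.injective]; exact h0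
      · rw [← hσ0, MvPolynomial.degreeOf_rename_of_injective σ.injective]; exact h2
      · rw [← hσ2, MvPolynomial.degreeOf_rename_of_injective σ.injective]; exact h1
      · rw [hq2'def, heq, map_add, map_mul, map_pow, MvPolynomial.rename_X,
          map_add, rename_sumCX, rename_sumCX, hσ0, hσ1, hσ2]
        ring
    have hface' : ∀ s : ℝ, s = 1 ∨ s = -1 → ∀ a < k, ∀ b < k,
        (∫ y in (-1:ℝ)..1, ∫ z in (-1:ℝ)..1, ev3 q2' s y z * y ^ a * z ^ b) = 0 := by
      intro s hs a ha b hb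
      have e : ∀ y z : ℝ, ev3 q2' s y z * y ^ a * z ^ b = ev3 q2 y s z * y ^ a * z ^ b :=
        fun y z => by rw [hev]
      simp only [e]
      exact hface2 s hs a ha b hb
    have hJ' : ∀ j < k,
        (∫ x in (-1:ℝ)..1, ∫ y in (-1:ℝ)..1, ∫ z in (-1:ℝ)..1,
          ev3 q2' x y z * Jac (k - 1) x * y ^ j) = 0 ∧
        (∫ x in (-1:ℝ)..1, ∫ y in (-1:ℝ)..1, ∫ z in (-1:ℝ)..1,
          ev3 q2' x y z * Jac (k - 1) x * z ^ j) = 0 := by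
      intro j hj
      constructor
      · have e : ∀ x y z : ℝ, ev3 q2' x y z * Jac (k - 1) x * y ^ j
            = ev3 q2 y x z * Jac (k - 1) x * y ^ j := fun x y z => by rw [hev]
        simp only [e]
        rw [swap_outer (f := fun x y z => ev3 q2 y x z * Jac (k - 1) x * y ^ j)
          (((contEv3v q2 (continuous_fst.comp continuous_snd) continuous_fst
            (continuous_snd.comp continuous_snd)).mul
            ((contJac (k - 1)).comp continuous_fst)).mul
            ((continuous_fst.comp continuous_snd).pow j))]
        exact (hJ2 j hj).1
      · have e : ∀ x y z : ℝ, ev3 q2' x y z * Jac (k - 1) x * z ^ j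
            = ev3 q2 y x z * Jac (k - 1) x * z ^ j := fun x y z => by rw [hev]
        simp only [e]
        rw [swap_outer (f := fun x y z => ev3 q2 y x z * Jac (k - 1) x * z ^ j)
          (((contEv3v q2 (continuous_fst.comp continuous_snd) continuous_fst
            (continuous_snd.comp continuous_snd)).mul
            ((contJac (k - 1)).comp continuous_fst)).mul
            ((continuous_snd.comp continuous_snd).pow j))]
        exact (hJ2 j hj).2
    have hint' : ∀ a b c : ℕ, a + 2 ≤ k → b < k → c < k →
        (∫ x in (-1:ℝ)..1, ∫ y in (-1:ℝ)..1, ∫ z in (-1:ℝ)..1,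
          ev3 q2' x y z * x ^ a * y ^ b * z ^ c) = 0 := by
      intro a b c ha hb hc
      have e : ∀ x y z : ℝ, ev3 q2' x y z * x ^ a * y ^ b * z ^ c
          = ev3 q2 y x z * x ^ a * y ^ b * z ^ c := fun x y z => by rw [hev]
      simp only [e]
      rw [swap_outer (f := fun x y z => ev3 q2 y x z * x ^ a * y ^ b * z ^ c)
        ((((contEv3v q2 (continuous_fst.comp continuous_snd) continuous_fst
          (continuous_snd.comp continuous_snd)).mul (continuous_fst.pow a)).mul
          ((continuous_fst.comp continuous_snd).pow b)).mul
          ((continuous_snd.comp continuous_snd).pow c))]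
      have e2 : ∀ u v w : ℝ, ev3 q2 u v w * v ^ a * u ^ b * w ^ c
          = ev3 q2 u v w * u ^ b * v ^ a * w ^ c := fun u v w => by ring
      simp only [e2]
      exact hint2 b a c hb ha hc
    have h0 : q2' = 0 := master k hk q2' hmem hface' hJ' hint'
    have heq0 : MvPolynomial.rename σ q2 = MvPolynomial.rename σ 0 := by
      rw [map_zero, ← hq2'def]; exact h0
    exact MvPolynomial.rename_injective _ σ.injective heq0
  · -- third component
    set σ : Equiv.Perm (Fin 3) := (Equiv.swap 1 2).trans (Equiv.swap 0 1) with hσ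
    have hσ0 : σ 0 = 1 := by decide
    have hσ1 : σ 1 = 2 := by decide
    have hσ2 : σ 2 = 0 := by decide
    set q3' : MvPolynomial (Fin 3) ℝ := MvPolynomial.rename σ q3 with hq3'def
    have hev : ∀ x y z : ℝ, ev3 q3' x y z = ev3 q3 y z x := by
      intro x y z
      rw [hq3'def]
      unfold ev3
      rw [MvPolynomial.eval_rename,
        show (![x, y, z] ∘ ⇑σ) = ![y, z, x] from by
          funext i; fin_cases i <;> simp [hσ0, hσ1, hσ2]]
    have hmem : memRT k 0 1 2 q3' := by
      obtain ⟨p, cu, cw, h0, h1, h2, heq⟩ := hq3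
      refine ⟨MvPolynomial.rename σ p, cu, cw, ?_, ?_, ?_, ?_⟩
      · rw [← hσ2, MvPolynomial.degreeOf_rename_of_injective σ.injective]; exact h0
      · rw [← hσ0, MvPolynomial.degreeOf_rename_of_injective σ.injective]; exact h1
      · rw [← hσ1, MvPolynomial.degreeOf_rename_of_injective σ.injective]; exact h2
      · rw [hq3'def, heq, map_add, map_mul, map_pow, MvPolynomial.rename_X,
          map_add, rename_sumCX, rename_sumCX, hσ0, hσ1, hσ2]
    have hface' : ∀ s : ℝ, s = 1 ∨ s = -1 → ∀ a < k, ∀ b < k,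
        (∫ y in (-1:ℝ)..1, ∫ z in (-1:ℝ)..1, ev3 q3' s y z * y ^ a * z ^ b) = 0 := by
      intro s hs a ha b hb
      have e : ∀ y z : ℝ, ev3 q3' s y z * y ^ a * z ^ b = ev3 q3 y z s * y ^ a * z ^ b :=
        fun y z => by rw [hev]
      simp only [e]
      exact hface3 s hs a ha b hb
    have hJ' : ∀ j < k,
        (∫ x in (-1:ℝ)..1, ∫ y in (-1:ℝ)..1, ∫ z in (-1:ℝ)..1,
          ev3 q3' x y z * Jac (k - 1) x * y ^ j) = 0 ∧
        (∫ x in (-1:ℝ)..1, ∫ y in (-1:ℝ)..1, ∫ z in (-1:ℝ)..1,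
          ev3 q3' x y z * Jac (k - 1) x * z ^ j) = 0 := by
      intro j hj
      constructor
      · have e : ∀ x y z : ℝ, ev3 q3' x y z * Jac (k - 1) x * y ^ j
            = ev3 q3 y z x * Jac (k - 1) x * y ^ j := fun x y z => by rw [hev]
        simp only [e]
        rw [rot3 (f := fun x y z => ev3 q3 y z x * Jac (k - 1) x * y ^ j)
          (((contEv3v q3 (continuous_fst.comp continuous_snd)
            (continuous_snd.comp continuous_snd) continuous_fst).mul
            ((contJac (k - 1)).comp continuous_fst)).mul
            ((continuous_fst.comp continuous_snd).pow j))]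
        exact (hJ3 j hj).1
      · have e : ∀ x y z : ℝ, ev3 q3' x y z * Jac (k - 1) x * z ^ j
            = ev3 q3 y z x * Jac (k - 1) x * z ^ j := fun x y z => by rw [hev]
        simp only [e]
        rw [rot3 (f := fun x y z => ev3 q3 y z x * Jac (k - 1) x * z ^ j)
          (((contEv3v q3 (continuous_fst.comp continuous_snd)
            (continuous_snd.comp continuous_snd) continuous_fst).mul
            ((contJac (k - 1)).comp continuous_fst)).mul
            ((continuous_snd.comp continuous_snd).pow j))]
        exact (hJ3 j hj).2
    have hint' : ∀ a b c : ℕ, a + 2 ≤ k → b < k → c < k →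
        (∫ x in (-1:ℝ)..1, ∫ y in (-1:ℝ)..1, ∫ z in (-1:ℝ)..1,
          ev3 q3' x y z * x ^ a * y ^ b * z ^ c) = 0 := by
      intro a b c ha hb hc
      have e : ∀ x y z : ℝ, ev3 q3' x y z * x ^ a * y ^ b * z ^ c
          = ev3 q3 y z x * x ^ a * y ^ b * z ^ c := fun x y z => by rw [hev]
      simp only [e]
      rw [rot3 (f := fun x y z => ev3 q3 y z x * x ^ a * y ^ b * z ^ c)
        ((((contEv3v q3 (continuous_fst.comp continuous_snd)
          (continuous_snd.comp continuous_snd) continuous_fst).mul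
          (continuous_fst.pow a)).mul
          ((continuous_fst.comp continuous_snd).pow b)).mul
          ((continuous_snd.comp continuous_snd).pow c))]
      have e2 : ∀ u v w : ℝ, ev3 q3 u v w * w ^ a * u ^ b * v ^ c
          = ev3 q3 u v w * u ^ b * v ^ c * w ^ a := fun u v w => by ring
      simp only [e2]
      exact hint3 b c a hb hc ha
    have h0 : q3' = 0 := master k hk q3' hmem hface' hJ' hint'
    have heq0 : MvPolynomial.rename σ q3 = MvPolynomial.rename σ 0 := by
      rw [map_zero, ← hq3'def]; exact h0
    exact MvPolynomial.rename_injective _ σ.injective heq0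

/-- Unisolvence of the enriched Raviart–Thomas element of order `k` on the reference cube
`K̂ = [-1,1]³` (Lemma 5.1): a field `q̂ = (q̂₁,q̂₂,q̂₃) ∈ H_k(K̂)` vanishes if
(1) all face moments of `q̂·ν̂` against `Q_{k-1}` vanish,
(2)–(4) all interior moments of `q̂ᵢ` against `J_{k-1}` times `P_{k-1}` in each of the other
variables vanish, and (5) all interior moments against `Ψ_{k-1}(K̂)` vanish. -/
theorem enriched_RT_unisolvence (k : ℕ) (hk : 1 ≤ k)
    (q1 q2 q3 : MvPolynomial (Fin 3) ℝ)
    (hq1 : memRT k 0 1 2 q1) (hq2 : memRT k 1 2 0 q2) (hq3 : memRT k 2 0 1 q3)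
    (hface1 : ∀ s : ℝ, s = 1 ∨ s = -1 → ∀ a < k, ∀ b < k,
      (∫ η in (-1 : ℝ)..1, ∫ ζ in (-1 : ℝ)..1, ev3 q1 s η ζ * η ^ a * ζ ^ b) = 0)
    (hface2 : ∀ s : ℝ, s = 1 ∨ s = -1 → ∀ a < k, ∀ b < k,
      (∫ ξ in (-1 : ℝ)..1, ∫ ζ in (-1 : ℝ)..1, ev3 q2 ξ s ζ * ξ ^ a * ζ ^ b) = 0)
    (hface3 : ∀ s : ℝ, s = 1 ∨ s = -1 → ∀ a < k, ∀ b < k,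
      (∫ ξ in (-1 : ℝ)..1, ∫ η in (-1 : ℝ)..1, ev3 q3 ξ η s * ξ ^ a * η ^ b) = 0)
    (hJ1 : ∀ j < k,
      (∫ ξ in (-1 : ℝ)..1, ∫ η in (-1 : ℝ)..1, ∫ ζ in (-1 : ℝ)..1,
        ev3 q1 ξ η ζ * Jac (k - 1) ξ * η ^ j) = 0 ∧
      (∫ ξ in (-1 : ℝ)..1, ∫ η in (-1 : ℝ)..1, ∫ ζ in (-1 : ℝ)..1,
        ev3 q1 ξ η ζ * Jac (k - 1) ξ * ζ ^ j) = 0)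
    (hJ2 : ∀ j < k,
      (∫ ξ in (-1 : ℝ)..1, ∫ η in (-1 : ℝ)..1, ∫ ζ in (-1 : ℝ)..1,
        ev3 q2 ξ η ζ * Jac (k - 1) η * ξ ^ j) = 0 ∧
      (∫ ξ in (-1 : ℝ)..1, ∫ η in (-1 : ℝ)..1, ∫ ζ in (-1 : ℝ)..1,
        ev3 q2 ξ η ζ * Jac (k - 1) η * ζ ^ j) = 0)
    (hJ3 : ∀ j < k,
      (∫ ξ in (-1 : ℝ)..1, ∫ η in (-1 : ℝ)..1, ∫ ζ in (-1 : ℝ)..1,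
        ev3 q3 ξ η ζ * Jac (k - 1) ζ * ξ ^ j) = 0 ∧
      (∫ ξ in (-1 : ℝ)..1, ∫ η in (-1 : ℝ)..1, ∫ ζ in (-1 : ℝ)..1,
        ev3 q3 ξ η ζ * Jac (k - 1) ζ * η ^ j) = 0)
    (hint1 : ∀ a b c : ℕ, a + 2 ≤ k → b < k → c < k →
      (∫ ξ in (-1 : ℝ)..1, ∫ η in (-1 : ℝ)..1, ∫ ζ in (-1 : ℝ)..1,
        ev3 q1 ξ η ζ * ξ ^ a * η ^ b * ζ ^ c) = 0)
    (hint2 : ∀ a b c : ℕ, a < k → b + 2 ≤ k → c < k →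
      (∫ ξ in (-1 : ℝ)..1, ∫ η in (-1 : ℝ)..1, ∫ ζ in (-1 : ℝ)..1,
        ev3 q2 ξ η ζ * ξ ^ a * η ^ b * ζ ^ c) = 0)
    (hint3 : ∀ a b c : ℕ, a < k → b < k → c + 2 ≤ k →
      (∫ ξ in (-1 : ℝ)..1, ∫ η in (-1 : ℝ)..1, ∫ ζ in (-1 : ℝ)..1,
        ev3 q3 ξ η ζ * ξ ^ a * η ^ b * ζ ^ c) = 0) :
    q1 = 0 ∧ q2 = 0 ∧ q3 = 0 := by
  exact enriched_RT_unisolvence' k hk q1 q2 q3 hq1 hq2 hq3 hface1 hface2 hface3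
    hJ1 hJ2 hJ3 hint1 hint2 hint3
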